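/- Under the PA setup, assume in addition that Γ is M-locally primitive, i.e., for every vertex γ the stabilizer M_γ acts primitively on Γ(γ). Then every coordinate projection π_i : M_α → R_i (1 ≤ i ≤ n) is injective; in particular M_α is isomorphic to R_i for every i. -/

import Mathlib

def IsAutGroup {V : Type*} (Γ : SimpleGraph V) (G : Subgroup (Equiv.Perm V)) : Prop :=
  ∀ g ∈ G, ∀ u v : V, Γ.Adj u v → Γ.Adj (g u) (g v)

def stabOf {V : Type*} (G : Subgroup (Equiv.Perm V)) (α : V) : Subgroup (Equiv.Perm V) :=
  G ⊓ MulAction.stabilizer (Equiv.Perm V) α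

def TransOn {V : Type*} (H : Subgroup (Equiv.Perm V)) (S : Set V) : Prop :=
  ∀ x ∈ S, ∀ y ∈ S, ∃ g ∈ H, g x = y

def IsBlockOn {V : Type*} (H : Subgroup (Equiv.Perm V)) (S B : Set V) : Prop :=
  B ⊆ S ∧ ∀ g ∈ H, (⇑g '' B) = B ∨ Disjoint (⇑g '' B) B

def PrimOn {V : Type*} (H : Subgroup (Equiv.Perm V)) (S : Set V) : Prop :=
  TransOn H S ∧ ∀ B : Set V, IsBlockOn H S B → B.Subsingleton ∨ B = S

def orbitOf {V : Type*} (H : Subgroup (Equiv.Perm V)) (γ : V) : Set V :=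
  {v | ∃ g ∈ H, g γ = v}

def NormalIn {W : Type*} [Group W] (N H : Subgroup W) : Prop :=
  N ≤ H ∧ ∀ h ∈ H, ∀ x ∈ N, h * x * h⁻¹ ∈ N

def TwoArcTrans {V : Type*} (Γ : SimpleGraph V) (G : Subgroup (Equiv.Perm V)) : Prop :=
  ∀ a b c a' b' c' : V, Γ.Adj a b → Γ.Adj b c → a ≠ c →
    Γ.Adj a' b' → Γ.Adj b' c' → a' ≠ c' →
    ∃ g ∈ G, g a = a' ∧ g b = b' ∧ g c = c'

/-- The ordered product of one element from each of the subgroups `T i`. -/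
def prodOf {W : Type*} [Group W] {n : ℕ} (T : Fin n → Subgroup W)
    (f : (i : Fin n) → ↥(T i)) : W :=
  (List.ofFn fun i => ((f i : W))).prod

section Helpers

theorem Equiv.Perm.inv_apply_self {α : Type*} (f : Equiv.Perm α) (x : α) : f⁻¹ (f x) = x :=
  f.symm_apply_apply x

theorem Equiv.Perm.apply_inv_self {α : Type*} (f : Equiv.Perm α) (x : α) : f (f⁻¹ x) = x :=
  f.apply_symm_apply x

namespace Aux

variable {W : Type*} [Group W]

lemma ofFn_prod_single : ∀ {n : ℕ} (h : Fin n → W) (k : Fin n),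
    (∀ j, j ≠ k → h j = 1) → (List.ofFn h).prod = h k := by
  intro n
  induction n with
  | zero => exact fun h k _ => k.elim0
  | succ m ih =>
    intro h k hk
    rw [List.ofFn_succ, List.prod_cons]
    rcases Fin.eq_zero_or_eq_succ k with hk0 | ⟨k', rfl⟩
    · subst hk0
      have : ∀ x ∈ List.ofFn (fun i : Fin m => h i.succ), x = 1 := by
        intro x hx
        obtain ⟨i, rfl⟩ := List.mem_ofFn.mp hx
        exact hk _ (Fin.succ_ne_zero i)
      rw [List.prod_eq_one this, mul_one]
    · have h0 : h 0 = 1 := hk _ (Ne.symm (Fin.succ_ne_zero k'))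
      rw [h0, one_mul]
      exact ih (fun i => h i.succ) k' (fun j hj => hk _ (by
        intro hc; exact hj (Fin.succ_injective _ hc)))

variable {n : ℕ}

lemma prodOf_mul {T : Fin n → Subgroup W}
    (hc : ∀ i j, i ≠ j → ∀ x ∈ T i, ∀ y ∈ T j, x * y = y * x)
    (f g : (i : Fin n) → ↥(T i)) :
    prodOf T (f * g) = prodOf T f * prodOf T g := by
  induction n with
  | zero => simp [prodOf]
  | succ m ih =>
    have hc' : ∀ i j : Fin m, i ≠ j → ∀ x ∈ T i.succ, ∀ y ∈ T j.succ,
        x * y = y * x := fun i j hij x hx y hy =>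
      hc i.succ j.succ (fun hh => hij (Fin.succ_injective _ hh)) x hx y hy
    have key := ih (T := fun i => T i.succ) hc' (fun i => f i.succ) (fun i => g i.succ)
    have hcomm : Commute ((g 0 : W)) (List.ofFn fun i : Fin m => ((f i.succ : W))).prod := by
      apply Commute.list_prod_right
      intro x hx
      obtain ⟨i, rfl⟩ := List.mem_ofFn.mp hx
      exact hc 0 i.succ (Ne.symm (Fin.succ_ne_zero i)) (g 0 : W) (g 0).2
        ((f i.succ : W)) (f i.succ).2
    simp only [prodOf, List.ofFn_succ, List.prod_cons] at key ⊢
    simp only [Pi.mul_apply, Subgroup.coe_mul] at key ⊢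
    rw [key, ← mul_assoc, mul_assoc ((f 0 : W)) ((g 0 : W)) _, hcomm.eq, ← mul_assoc,
      mul_assoc]

lemma prodOf_one {T : Fin n → Subgroup W} : prodOf T 1 = 1 := by
  apply List.prod_eq_one
  intro x hx
  obtain ⟨i, rfl⟩ := List.mem_ofFn.mp hx
  simp

lemma prodOf_inv {T : Fin n → Subgroup W}
    (hc : ∀ i j, i ≠ j → ∀ x ∈ T i, ∀ y ∈ T j, x * y = y * x)
    (f : (i : Fin n) → ↥(T i)) :
    prodOf T f⁻¹ = (prodOf T f)⁻¹ := by
  have h1 := prodOf_mul hc f f⁻¹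
  rw [mul_inv_cancel, prodOf_one] at h1
  exact (inv_eq_of_mul_eq_one_right h1.symm).symm

lemma prodOf_single {T : Fin n → Subgroup W} (k : Fin n) (x : ↥(T k)) :
    prodOf T (Pi.mulSingle k x) = (x : W) := by
  have hside : ∀ j, j ≠ k → ((Pi.mulSingle (M := fun i => ↥(T i)) k x j : ↥(T j)) : W) = 1 := by
    intro j hj
    rw [Pi.mulSingle_eq_of_ne hj]
    simp
  rw [prodOf, ofFn_prod_single _ k hside]
  simp

lemma prodOf_mem {T : Fin n → Subgroup W} {M : Subgroup W} (hTM : ∀ i, T i ≤ M)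
    (f : (i : Fin n) → ↥(T i)) : prodOf T f ∈ M := by
  apply list_prod_mem
  intro x hx
  obtain ⟨i, rfl⟩ := List.mem_ofFn.mp hx
  exact hTM i (f i).2

lemma prodOf_decomp {T : Fin n → Subgroup W}
    (hc : ∀ i j, i ≠ j → ∀ x ∈ T i, ∀ y ∈ T j, x * y = y * x)
    (f : (i : Fin n) → ↥(T i)) (k : Fin n) :
    prodOf T f = (f k : W) * prodOf T (Function.update f k 1) := by
  have hf : f = Pi.mulSingle k (f k) * Function.update f k 1 := by
    funext j
    by_cases hj : j = k
    · subst hj; simp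
    · simp [Pi.mulSingle_eq_of_ne hj, Function.update_of_ne hj]
  conv_lhs => rw [hf]
  rw [prodOf_mul hc, prodOf_single]

end Aux

namespace Aux2

open Aux

variable {W : Type*} [Group W] {n : ℕ}

/-- The subgroup of elements whose `k`-th coordinate is trivial. -/
def NK (T : Fin n → Subgroup W)
    (hc : ∀ i j, i ≠ j → ∀ x ∈ T i, ∀ y ∈ T j, x * y = y * x) (k : Fin n) :
    Subgroup W where
  carrier := {x | ∃ f : (i : Fin n) → ↥(T i), x = prodOf T f ∧ f k = 1}
  one_mem' := ⟨1, prodOf_one.symm, rfl⟩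
  mul_mem' := by
    rintro a b ⟨f, hf, hfk⟩ ⟨g, hg, hgk⟩
    exact ⟨f * g, by rw [prodOf_mul hc, ← hf, ← hg], by rw [Pi.mul_apply, hfk, hgk, mul_one]⟩
  inv_mem' := by
    rintro a ⟨f, hf, hfk⟩
    exact ⟨f⁻¹, by rw [prodOf_inv hc, ← hf], by rw [Pi.inv_apply, hfk, inv_one]⟩

variable {T : Fin n → Subgroup W}
  {hc : ∀ i j, i ≠ j → ∀ x ∈ T i, ∀ y ∈ T j, x * y = y * x}

lemma mem_NK {k : Fin n} {x : W} :
    x ∈ NK T hc k ↔ ∃ f : (i : Fin n) → ↥(T i), x = prodOf T f ∧ f k = 1 :=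
  Iff.rfl

lemma NK_le {M : Subgroup W} (hTM : ∀ i, T i ≤ M) {k : Fin n} : NK T hc k ≤ M := by
  rintro x ⟨f, rfl, -⟩
  exact prodOf_mem hTM f

lemma commute_of_mem_NK {k : Fin n} {x t : W} (hx : x ∈ NK T hc k) (ht : t ∈ T k) :
    x * t = t * x := by
  obtain ⟨f, rfl, hfk⟩ := hx
  have : Commute t (prodOf T f) := by
    apply Commute.list_prod_right
    intro y hy
    obtain ⟨j, rfl⟩ := List.mem_ofFn.mp hy
    show Commute t ((f j : W))
    by_cases hjk : j = k
    · subst hjk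
      rw [hfk]
      simp
    · exact (hc k j (fun hh => hjk hh.symm) t ht _ (f j).2)
  exact this.eq.symm

lemma center_triv {k : Fin n} (hsimple : IsSimpleGroup ↥(T k))
    (hnonab : ∃ x ∈ T k, ∃ y ∈ T k, x * y ≠ y * x)
    (z : ↥(T k)) (hz : ∀ t : ↥(T k), z * t = t * z) : z = 1 := by
  have hzc : z ∈ Subgroup.center ↥(T k) := by
    rw [Subgroup.mem_center_iff]
    exact fun g => (hz g).symm
  have hnor : (Subgroup.center ↥(T k)).Normal := by
    constructor
    intro z hz g
    have hgz := Subgroup.mem_center_iff.mp hz g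
    have : g * z * g⁻¹ = z := by rw [hgz, mul_assoc, mul_inv_cancel, mul_one]
    rwa [this]
  rcases hsimple.eq_bot_or_eq_top_of_normal (Subgroup.center ↥(T k)) hnor with hbot | htop
  · rw [hbot] at hzc
    exact hzc
  · exfalso
    obtain ⟨x, hx, y, hy, hxy⟩ := hnonab
    have : (⟨x, hx⟩ : ↥(T k)) * ⟨y, hy⟩ = ⟨y, hy⟩ * ⟨x, hx⟩ := by
      have := Subgroup.mem_center_iff.mp (htop ▸ Subgroup.mem_top (⟨x, hx⟩ : ↥(T k))) ⟨y, hy⟩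
      exact this.symm
    exact hxy (congrArg Subtype.val this)

lemma mem_NK_iff_comm {M : Subgroup W} (hTM : ∀ i, T i ≤ M)
    (hfact : ∀ m ∈ M, ∃! f : (i : Fin n) → ↥(T i), m = prodOf T f)
    (hsimple : ∀ i, IsSimpleGroup ↥(T i))
    (hnonab : ∀ i, ∃ x ∈ T i, ∃ y ∈ T i, x * y ≠ y * x)
    {k : Fin n} {x : W} :
    x ∈ NK T hc k ↔ x ∈ M ∧ ∀ t ∈ T k, x * t = t * x := by
  constructor
  · intro hx
    exact ⟨NK_le hTM hx, fun t ht => commute_of_mem_NK hx ht⟩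
  · rintro ⟨hxM, hcomm⟩
    obtain ⟨f, hf, -⟩ := hfact x hxM
    have hdec := prodOf_decomp hc f k
    have hrest : prodOf T (Function.update f k 1) ∈ NK T hc k :=
      ⟨Function.update f k 1, rfl, Function.update_self k 1 f⟩
    have hfk1 : f k = 1 := by
      apply center_triv (hsimple k) (hnonab k)
      intro t
      apply Subtype.ext
      push_cast
      have h1 : ∀ s ∈ T k, prodOf T (Function.update f k 1) * s
          = s * prodOf T (Function.update f k 1) :=
        fun s hs => commute_of_mem_NK hrest hs
      have h2 := hcomm (t : W) t.2
      rw [hf, hdec] at h2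
      -- h2 : (f k) * rest * t = t * ((f k) * rest)
      have h3 : (f k : W) * (prodOf T (Function.update f k 1) * (t : W))
          = (t : W) * (f k : W) * prodOf T (Function.update f k 1) := by
        rw [← mul_assoc, h2, mul_assoc]
      rw [h1 (t : W) t.2] at h3
      rw [← mul_assoc] at h3
      exact mul_right_cancel h3
    exact ⟨f, hf, hfk1⟩

lemma T_normal (hc : ∀ i j, i ≠ j → ∀ x ∈ T i, ∀ y ∈ T j, x * y = y * x)
    {M : Subgroup W}
    (hfact : ∀ m ∈ M, ∃! f : (i : Fin n) → ↥(T i), m = prodOf T f)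
    {l : Fin n} {m x : W} (hm : m ∈ M) (hx : x ∈ T l) : m * x * m⁻¹ ∈ T l := by
  obtain ⟨f, hf, -⟩ := hfact m hm
  have hdec := prodOf_decomp hc f l
  set r := prodOf T (Function.update f l 1) with hr
  have hrN : r ∈ NK T hc l := ⟨_, rfl, Function.update_self l 1 f⟩
  have hrx : r * x = x * r := commute_of_mem_NK hrN hx
  have : m * x * m⁻¹ = (f l : W) * x * (f l : W)⁻¹ := by
    rw [hf, hdec]
    rw [mul_inv_rev]
    have : (f l : W) * r * x * (r⁻¹ * (f l : W)⁻¹)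
        = (f l : W) * (r * x * r⁻¹) * (f l : W)⁻¹ := by group
    rw [this, hrx, mul_assoc (x) r r⁻¹, mul_inv_cancel, mul_one]
  rw [this]
  exact mul_mem (mul_mem ((f l).2) hx) (inv_mem (f l).2)

lemma NK_normal {M : Subgroup W}
    (hfact : ∀ m ∈ M, ∃! f : (i : Fin n) → ↥(T i), m = prodOf T f)
    {k : Fin n} {m x : W} (hm : m ∈ M) (hx : x ∈ NK T hc k) :
    m * x * m⁻¹ ∈ NK T hc k := by
  obtain ⟨g, hg, -⟩ := hfact m hm
  obtain ⟨f, hf, hfk⟩ := hx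
  refine ⟨g * f * g⁻¹, ?_, ?_⟩
  · rw [prodOf_mul hc, prodOf_mul hc, prodOf_inv hc, ← hg, ← hf]
  · rw [Pi.mul_apply, Pi.mul_apply, Pi.inv_apply, hfk, mul_one, mul_inv_cancel]


lemma conj_factor {M : Subgroup W}
    (hc : ∀ i j, i ≠ j → ∀ x ∈ T i, ∀ y ∈ T j, x * y = y * x)
    (hTM : ∀ i, T i ≤ M)
    (hfact : ∀ m ∈ M, ∃! f : (i : Fin n) → ↥(T i), m = prodOf T f)
    (hsimple : ∀ i, IsSimpleGroup ↥(T i))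
    (hnonab : ∀ i, ∃ x ∈ T i, ∃ y ∈ T i, x * y ≠ y * x)
    {g : W} (hg : ∀ x ∈ M, g * x * g⁻¹ ∈ M) (hg' : ∀ x ∈ M, g⁻¹ * x * g ∈ M)
    (j : Fin n) : ∃ k, ∀ x : W, x ∈ T k ↔ g * x * g⁻¹ ∈ T j := by
  classical
  set S : Subgroup W := (T j).comap (MulAut.conj g).toMonoidHom with hS
  have hmemS : ∀ x : W, x ∈ S ↔ g * x * g⁻¹ ∈ T j := by
    intro x
    rw [hS, Subgroup.mem_comap]
    simp [MulAut.conj_apply]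
  have hSM : S ≤ M := by
    intro x hx
    have h1 : g * x * g⁻¹ ∈ M := hTM j ((hmemS x).mp hx)
    have h2 := hg' _ h1
    have : g⁻¹ * (g * x * g⁻¹) * g = x := by group
    rwa [this] at h2
  have hSnormal : ∀ m ∈ M, ∀ s ∈ S, m * s * m⁻¹ ∈ S := by
    intro m hm s hs
    rw [hmemS]
    have h1 : g * (m * s * m⁻¹) * g⁻¹
        = (g * m * g⁻¹) * (g * s * g⁻¹) * (g * m * g⁻¹)⁻¹ := by group
    rw [h1]
    exact T_normal hc hfact (hg m hm) ((hmemS s).mp hs)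
  have hSnonab : ∃ a ∈ S, ∃ b ∈ S, a * b ≠ b * a := by
    obtain ⟨x, hx, y, hy, hxy⟩ := hnonab j
    refine ⟨g⁻¹ * x * g, ?_, g⁻¹ * y * g, ?_, ?_⟩
    · rw [hmemS]
      have : g * (g⁻¹ * x * g) * g⁻¹ = x := by group
      rwa [this]
    · rw [hmemS]
      have : g * (g⁻¹ * y * g) * g⁻¹ = y := by group
      rwa [this]
    · intro hcon
      apply hxy
      have := congrArg (fun w => g * w * g⁻¹) hcon
      have e1 : g * (g⁻¹ * x * g * (g⁻¹ * y * g)) * g⁻¹ = x * y := by group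
      have e2 : g * (g⁻¹ * y * g * (g⁻¹ * x * g)) * g⁻¹ = y * x := by group
      rw [e1, e2] at this
      exact this
  by_cases hex : ∃ l, ∀ t, t ∈ T l → t ∈ S
  · obtain ⟨l, hl⟩ := hex
    -- the conjugation isomorphism e : T j ≃* S
    have e : ↥(T j) ≃* ↥S := by
      refine ⟨⟨fun t => ⟨g⁻¹ * (t : W) * g, ?_⟩, fun s => ⟨g * (s : W) * g⁻¹, (hmemS _).mp s.2⟩,
        ?_, ?_⟩, ?_⟩
      · rw [hmemS]
        have : g * (g⁻¹ * (t : W) * g) * g⁻¹ = (t : W) := by group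
        rw [this]
        exact t.2
      · intro t
        apply Subtype.ext
        show g * (g⁻¹ * (t : W) * g) * g⁻¹ = (t : W)
        group
      · intro s
        apply Subtype.ext
        show g⁻¹ * (g * (s : W) * g⁻¹) * g = (s : W)
        group
      · intro a b
        apply Subtype.ext
        show g⁻¹ * ((a : W) * (b : W)) * g = (g⁻¹ * (a : W) * g) * (g⁻¹ * (b : W) * g)
        group
    have hQnormal : ((T l).comap S.subtype).Normal := by
      constructor
      intro q hq s
      rw [Subgroup.mem_comap] at hq ⊢
      exact T_normal hc hfact (hSM s.2) hq
    have hQ'normal : (((T l).comap S.subtype).comap e.toMonoidHom).Normal :=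
      hQnormal.comap e.toMonoidHom
    rcases (hsimple j).eq_bot_or_eq_top_of_normal _ hQ'normal with hbot | htop
    · exfalso
      obtain ⟨x, hx, y, hy, hxy⟩ := hnonab l
      have hx1 : x = 1 := by
        have hxS : x ∈ S := hl x hx
        have : e.symm ⟨x, hxS⟩ ∈ ((T l).comap S.subtype).comap e.toMonoidHom := by
          rw [Subgroup.mem_comap]
          simp only [MulEquiv.coe_toMonoidHom, MulEquiv.apply_symm_apply]
          rw [Subgroup.mem_comap]
          exact hx
        rw [hbot, Subgroup.mem_bot] at this
        have := congrArg e this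
        rw [MulEquiv.apply_symm_apply, map_one] at this
        exact congrArg Subtype.val this
      have hy1 : y = 1 := by
        have hyS : y ∈ S := hl y hy
        have : e.symm ⟨y, hyS⟩ ∈ ((T l).comap S.subtype).comap e.toMonoidHom := by
          rw [Subgroup.mem_comap]
          simp only [MulEquiv.coe_toMonoidHom, MulEquiv.apply_symm_apply]
          rw [Subgroup.mem_comap]
          exact hy
        rw [hbot, Subgroup.mem_bot] at this
        have := congrArg e this
        rw [MulEquiv.apply_symm_apply, map_one] at this
        exact congrArg Subtype.val this
      rw [hx1, hy1] at hxy
      exact hxy rfl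
    · refine ⟨l, fun x => ⟨fun hx => (hmemS x).mp (hl x hx), fun hx => ?_⟩⟩
      -- x with g x g⁻¹ ∈ T j means x ∈ S; show x ∈ T l
      have hxS : x ∈ S := (hmemS x).mpr hx
      have : e.symm ⟨x, hxS⟩ ∈ (⊤ : Subgroup ↥(T j)) := Subgroup.mem_top _
      rw [← htop, Subgroup.mem_comap] at this
      simp only [MulEquiv.coe_toMonoidHom, MulEquiv.apply_symm_apply] at this
      rw [Subgroup.mem_comap] at this
      exact this
  · push_neg at hex
    exfalso
    have htriv : ∀ l, ∀ x : W, x ∈ S → x ∈ T l → x = 1 := by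
      intro l x hxS hxT
      have hPnormal : (S.comap (T l).subtype).Normal := by
        constructor
        intro p hp t
        rw [Subgroup.mem_comap] at hp ⊢
        exact hSnormal _ (hTM l t.2) _ hp
      rcases (hsimple l).eq_bot_or_eq_top_of_normal _ hPnormal with hbot | htop
      · have : (⟨x, hxT⟩ : ↥(T l)) ∈ S.comap (T l).subtype := by
          rw [Subgroup.mem_comap]; exact hxS
        rw [hbot, Subgroup.mem_bot] at this
        exact congrArg Subtype.val this
      · exfalso
        obtain ⟨t, ht, hts⟩ := hex l
        apply hts
        have : (⟨t, ht⟩ : ↥(T l)) ∈ S.comap (T l).subtype := htop ▸ Subgroup.mem_top _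
        rw [Subgroup.mem_comap] at this
        exact this
    have hcommall : ∀ s ∈ S, ∀ l, ∀ x ∈ T l, s * x = x * s := by
      intro s hs l x hx
      have hct : s * x * s⁻¹ * x⁻¹ ∈ T l := mul_mem (T_normal hc hfact (hSM hs) hx) (inv_mem hx)
      have hcs : s * x * s⁻¹ * x⁻¹ ∈ S := by
        have h1 : x * s⁻¹ * x⁻¹ ∈ S := hSnormal x (hTM l hx) s⁻¹ (inv_mem hs)
        have : s * x * s⁻¹ * x⁻¹ = s * (x * s⁻¹ * x⁻¹) := by group
        rw [this]
        exact mul_mem hs h1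
      have h1 := htriv l _ hcs hct
      have : s * x = (s * x * s⁻¹ * x⁻¹) * (x * s) := by group
      rw [this, h1, one_mul]
    obtain ⟨a, ha, b, hb, hab⟩ := hSnonab
    apply hab
    obtain ⟨f, hf, -⟩ := hfact b (hSM hb)
    have : Commute a b := by
      rw [hf]
      apply Commute.list_prod_right
      intro y hy
      obtain ⟨l, rfl⟩ := List.mem_ofFn.mp hy
      show Commute a ((f l : W))
      exact hcommall a ha l _ (f l).2
    exact this.eq

end Aux2

end Helpers

section Main

open Aux Aux2

/-- **Lemma 4.2 (local-prim).** In the PA setup, if `Γ` is `M`-locally primitive then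
every projection `π_i : M_α → R_i` is injective; in particular `M_α ≅ R_i` for all `i`. -/
theorem stmt_9
    {V : Type*} [Finite V] (Γ : SimpleGraph V)
    (G Gstar M : Subgroup (Equiv.Perm V)) (α β : V)
    (n : ℕ) (T R : Fin n → Subgroup (Equiv.Perm V))
    (hconn : Γ.Connected)
    (hval : ∀ γ : V, 3 ≤ (Γ.neighborSet γ).ncard)
    (hG : IsAutGroup Γ G)
    (h2arc : TwoArcTrans Γ G)
    (hadj : Γ.Adj α β)
    (hGstar : Gstar = stabOf G α ⊔ stabOf G β)
    (hMGstar : NormalIn M Gstar)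
    (hMG : NormalIn M G)
    (hMbot : M ≠ ⊥)
    (hMuniq : ∀ N : Subgroup (Equiv.Perm V), NormalIn N Gstar → N ≠ ⊥ → M ≤ N)
    (hn : 2 ≤ n)
    (hTsimple : ∀ i, IsSimpleGroup ↥(T i))
    (hTnonab : ∀ i, ∃ x ∈ T i, ∃ y ∈ T i, x * y ≠ y * x)
    (hTiso : ∀ i j, Nonempty (↥(T i) ≃* ↥(T j)))
    (hTM : ∀ i, T i ≤ M)
    (hTcomm : ∀ i j, i ≠ j → ∀ x ∈ T i, ∀ y ∈ T j, x * y = y * x)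
    (hfact : ∀ m ∈ M, ∃! f : (i : Fin n) → ↥(T i), m = prodOf T f)
    (hRbot : ∀ i, R i ≠ ⊥) (hRle : ∀ i, R i ≤ T i) (hRne : ∀ i, R i ≠ T i)
    (horb : ∀ γ : V, orbitOf M γ = orbitOf Gstar γ)
    (hMα : ∀ m ∈ stabOf M α, ∀ f : (i : Fin n) → ↥(T i),
      m = prodOf T f → ∀ i, ((f i : Equiv.Perm V)) ∈ R i)
    (hsurj : ∀ i, ∀ y ∈ R i, ∃ m ∈ stabOf M α, ∃ f : (i : Fin n) → ↥(T i),
      m = prodOf T f ∧ ((f i : Equiv.Perm V)) = y)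
    (hlocprim : ∀ γ : V, PrimOn (stabOf M γ) (Γ.neighborSet γ)) :
    (∀ i : Fin n, ∀ m ∈ stabOf M α, ∀ m' ∈ stabOf M α,
      ∀ f f' : (i : Fin n) → ↥(T i), m = prodOf T f → m' = prodOf T f' →
        f i = f' i → m = m') ∧
    (∀ i : Fin n, Nonempty (↥(stabOf M α) ≃* ↥(R i))) := by
  classical
  have hMleG : M ≤ G := hMG.1
  have hstab : ∀ (γ : V) (x : Equiv.Perm V), x ∈ stabOf M γ ↔ x ∈ M ∧ x γ = γ := by
    intro γ x
    rw [stabOf, Subgroup.mem_inf]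
    simp [MulAction.mem_stabilizer_iff, Equiv.Perm.smul_def]
  have hadj' : ∀ g ∈ G, ∀ u v : V, Γ.Adj (g u) (g v) → Γ.Adj u v := by
    intro g hg u v hh
    have := hG g⁻¹ (inv_mem hg) _ _ hh
    simpa using this
  have hnbr : ∀ g ∈ G, ∀ γ x : V, x ∈ Γ.neighborSet γ → g x ∈ Γ.neighborSet (g γ) := by
    intro g hg γ x hx
    rw [SimpleGraph.mem_neighborSet] at hx ⊢
    exact hG g hg _ _ hx
  have htransloc : ∀ γ : V, TransOn (stabOf M γ) (Γ.neighborSet γ) := fun γ => (hlocprim γ).1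
  -- every neighbour of an `orbitOf M α` vertex lies in `orbitOf M β`, and vice versa
  have hOnbr : ∀ (γ δ : V), Γ.Adj γ δ → ∀ v, v ∈ orbitOf M γ →
      ∀ x ∈ Γ.neighborSet v, x ∈ orbitOf M δ := by
    rintro γ δ hγδ v ⟨m, hm, rfl⟩ x hx
    have h1 : m⁻¹ x ∈ Γ.neighborSet γ := by
      have := hnbr m⁻¹ (inv_mem (hMleG hm)) (m γ) x hx
      rwa [Equiv.Perm.inv_apply_self] at this
    obtain ⟨s, hs, hsx⟩ := htransloc γ δ ((SimpleGraph.mem_neighborSet _ _ _).mpr hγδ) _ h1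
    obtain ⟨hsM, hsγ⟩ := (hstab γ s).mp hs
    refine ⟨m * s, mul_mem hm hsM, ?_⟩
    rw [Equiv.Perm.mul_apply, hsx, Equiv.Perm.apply_inv_self]
  have hwalkcover : ∀ (u v : V) (w : Γ.Walk u v),
      (v ∈ orbitOf M α ∨ v ∈ orbitOf M β) → (u ∈ orbitOf M α ∨ u ∈ orbitOf M β) := by
    intro u v w
    induction w with
    | nil => exact id
    | @cons a b _ hab _ ih =>
      intro hv
      rcases ih hv with hA | hB
      · exact Or.inr (hOnbr α β hadj b hA a ((SimpleGraph.mem_neighborSet _ _ _).mpr hab.symm))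
      · exact Or.inl (hOnbr β α hadj.symm b hB a
          ((SimpleGraph.mem_neighborSet _ _ _).mpr hab.symm))
  have hcover : ∀ v : V, v ∈ orbitOf M α ∨ v ∈ orbitOf M β := by
    intro v
    obtain ⟨w⟩ := hconn.preconnected v α
    exact hwalkcover v α w (Or.inl ⟨1, one_mem _, rfl⟩)
  -- the block dichotomy coming from local primitivity
  have hdich : ∀ (k : Fin n) (γ : V),
      (∀ u : Equiv.Perm V, u ∈ NK T hTcomm k → u ∈ stabOf M γ →
        ∀ x ∈ Γ.neighborSet γ, u x = x) ∨
      (∀ x ∈ Γ.neighborSet γ, ∀ y ∈ Γ.neighborSet γ, ∃ u : Equiv.Perm V,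
        u ∈ NK T hTcomm k ∧ u ∈ stabOf M γ ∧ u x = y) := by
    intro k γ
    by_cases hfix : ∀ u : Equiv.Perm V, u ∈ NK T hTcomm k → u ∈ stabOf M γ →
        ∀ x ∈ Γ.neighborSet γ, u x = x
    · exact Or.inl hfix
    right
    push_neg at hfix
    obtain ⟨u0, hu0N, hu0s, x0, hx0, hux0⟩ := hfix
    set B : Set V := {y | ∃ u : Equiv.Perm V,
      u ∈ NK T hTcomm k ∧ u ∈ stabOf M γ ∧ u x0 = y} with hBdef
    have hx0B : x0 ∈ B := ⟨1, one_mem _, one_mem _, rfl⟩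
    have hBsub : B ⊆ Γ.neighborSet γ := by
      rintro y ⟨u, huN, hus, rfl⟩
      obtain ⟨huM, huγ⟩ := (hstab γ u).mp hus
      have := hnbr u (hMleG huM) γ x0 hx0
      rwa [huγ] at this
    have hBblock : IsBlockOn (stabOf M γ) (Γ.neighborSet γ) B := by
      refine ⟨hBsub, ?_⟩
      intro m hms
      obtain ⟨hmM, hmγ⟩ := (hstab γ m).mp hms
      have him : ⇑m '' B = {y | ∃ u : Equiv.Perm V,
          u ∈ NK T hTcomm k ∧ u ∈ stabOf M γ ∧ u (m x0) = y} := by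
        ext z
        constructor
        · rintro ⟨y, ⟨u, huN, hus, rfl⟩, rfl⟩
          obtain ⟨huM, huγ⟩ := (hstab γ u).mp hus
          refine ⟨m * u * m⁻¹, NK_normal hfact hmM huN, ?_, ?_⟩
          · rw [hstab]
            refine ⟨mul_mem (mul_mem hmM huM) (inv_mem hmM), ?_⟩
            rw [Equiv.Perm.mul_apply, Equiv.Perm.mul_apply]
            have : m⁻¹ γ = γ := by
              conv_lhs => rw [← hmγ]
              rw [Equiv.Perm.inv_apply_self]
            rw [this, huγ, hmγ]
          · rw [Equiv.Perm.mul_apply, Equiv.Perm.mul_apply, Equiv.Perm.inv_apply_self]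
        · rintro ⟨u, huN, hus, rfl⟩
          obtain ⟨huM, huγ⟩ := (hstab γ u).mp hus
          refine ⟨(m⁻¹ * u * m) x0, ⟨m⁻¹ * u * m, ?_, ?_, rfl⟩, ?_⟩
          · have := NK_normal hfact (inv_mem hmM) huN
            rwa [inv_inv] at this
          · rw [hstab]
            refine ⟨mul_mem (mul_mem (inv_mem hmM) huM) hmM, ?_⟩
            rw [Equiv.Perm.mul_apply, Equiv.Perm.mul_apply, hmγ, huγ]
            conv_lhs => rw [← hmγ]
            rw [Equiv.Perm.inv_apply_self]
          · rw [Equiv.Perm.mul_apply, Equiv.Perm.mul_apply, Equiv.Perm.apply_inv_self]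
      by_cases hmem : m x0 ∈ B
      · left
        rw [him]
        obtain ⟨u1, hu1N, hu1s, hu1x⟩ := hmem
        ext z
        constructor
        · rintro ⟨u, huN, hus, rfl⟩
          refine ⟨u * u1, mul_mem huN hu1N, mul_mem hus hu1s, ?_⟩
          rw [Equiv.Perm.mul_apply, hu1x]
        · rintro ⟨u, huN, hus, rfl⟩
          refine ⟨u * u1⁻¹, mul_mem huN (inv_mem hu1N), mul_mem hus (inv_mem hu1s), ?_⟩
          rw [Equiv.Perm.mul_apply, ← hu1x, Equiv.Perm.inv_apply_self]
      · right
        rw [him, Set.disjoint_left]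
        rintro z ⟨u, huN, hus, rfl⟩ ⟨u', hu'N, hu's, hu'z⟩
        apply hmem
        refine ⟨u⁻¹ * u', mul_mem (inv_mem huN) hu'N, mul_mem (inv_mem hus) hu's, ?_⟩
        rw [Equiv.Perm.mul_apply, hu'z, Equiv.Perm.inv_apply_self]
    rcases (hlocprim γ).2 B hBblock with hsing | heq
    · exact absurd (hsing (hBdef ▸ ⟨u0, hu0N, hu0s, rfl⟩) hx0B) hux0
    · intro x hx y hy
      rw [← heq] at hx hy
      obtain ⟨ux, hxN, hxs, hxe⟩ := hx
      obtain ⟨uy, hyN, hys, hye⟩ := hy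
      refine ⟨uy * ux⁻¹, mul_mem hyN (inv_mem hxN), mul_mem hys (inv_mem hxs), ?_⟩
      rw [Equiv.Perm.mul_apply, ← hxe, Equiv.Perm.inv_apply_self, hye]
  -- conjugation transport of the "fixes all neighbours" property
  have htfix : ∀ (k : Fin n) (γ γ' : V) (m : Equiv.Perm V), m ∈ M → m γ = γ' →
      (∀ u : Equiv.Perm V, u ∈ NK T hTcomm k → u ∈ stabOf M γ →
        ∀ x ∈ Γ.neighborSet γ, u x = x) →
      (∀ u : Equiv.Perm V, u ∈ NK T hTcomm k → u ∈ stabOf M γ' →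
        ∀ x ∈ Γ.neighborSet γ', u x = x) := by
    intro k γ γ' m hm hmγ hfix u huN hus x hx
    obtain ⟨huM, huγ'⟩ := (hstab γ' u).mp hus
    have hinv : m⁻¹ γ' = γ := by rw [← hmγ, Equiv.Perm.inv_apply_self]
    have hu' : (m⁻¹ * u * m) ∈ NK T hTcomm k := by
      have := NK_normal hfact (inv_mem hm) huN
      rwa [inv_inv] at this
    have hu's : (m⁻¹ * u * m) ∈ stabOf M γ := by
      rw [hstab]
      refine ⟨mul_mem (mul_mem (inv_mem hm) huM) hm, ?_⟩
      rw [Equiv.Perm.mul_apply, Equiv.Perm.mul_apply, hmγ, huγ', hinv]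
    have hx' : m⁻¹ x ∈ Γ.neighborSet γ := by
      have := hnbr m⁻¹ (inv_mem (hMleG hm)) γ' x hx
      rwa [hinv] at this
    have := hfix _ hu' hu's _ hx'
    rw [Equiv.Perm.mul_apply, Equiv.Perm.mul_apply, Equiv.Perm.apply_inv_self] at this
    have h2 := congrArg m this
    simpa using h2
  -- conjugation transport of local transitivity
  have httrans : ∀ (k : Fin n) (γ γ' : V) (m : Equiv.Perm V), m ∈ M → m γ = γ' →
      (∀ x ∈ Γ.neighborSet γ, ∀ y ∈ Γ.neighborSet γ, ∃ u : Equiv.Perm V,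
        u ∈ NK T hTcomm k ∧ u ∈ stabOf M γ ∧ u x = y) →
      (∀ x ∈ Γ.neighborSet γ', ∀ y ∈ Γ.neighborSet γ', ∃ u : Equiv.Perm V,
        u ∈ NK T hTcomm k ∧ u ∈ stabOf M γ' ∧ u x = y) := by
    intro k γ γ' m hm hmγ htr x hx y hy
    have hinv : m⁻¹ γ' = γ := by rw [← hmγ, Equiv.Perm.inv_apply_self]
    have hx' : m⁻¹ x ∈ Γ.neighborSet γ := by
      have := hnbr m⁻¹ (inv_mem (hMleG hm)) γ' x hx
      rwa [hinv] at this
    have hy' : m⁻¹ y ∈ Γ.neighborSet γ := by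
      have := hnbr m⁻¹ (inv_mem (hMleG hm)) γ' y hy
      rwa [hinv] at this
    obtain ⟨u, huN, hus, hux⟩ := htr _ hx' _ hy'
    obtain ⟨huM, huγ⟩ := (hstab γ u).mp hus
    refine ⟨m * u * m⁻¹, NK_normal hfact hm huN, ?_, ?_⟩
    · rw [hstab]
      refine ⟨mul_mem (mul_mem hm huM) (inv_mem hm), ?_⟩
      rw [Equiv.Perm.mul_apply, Equiv.Perm.mul_apply, hinv, huγ, hmγ]
    · rw [Equiv.Perm.mul_apply, Equiv.Perm.mul_apply, hux,
        Equiv.Perm.apply_inv_self]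
  -- the central contradiction: no coordinate subgroup complement acts locally
  -- transitively at β
  have hcontra : ∀ k : Fin n,
      (∀ x ∈ Γ.neighborSet β, ∀ y ∈ Γ.neighborSet β, ∃ u : Equiv.Perm V,
        u ∈ NK T hTcomm k ∧ u ∈ stabOf M β ∧ u x = y) → False := by
    intro k htrβ
    have hrefl : ∀ x, ∃ u : Equiv.Perm V, u ∈ NK T hTcomm k ∧ u x = x :=
      fun x => ⟨1, one_mem _, rfl⟩
    have hsymm : ∀ x y, (∃ u : Equiv.Perm V, u ∈ NK T hTcomm k ∧ u x = y) →
        ∃ u : Equiv.Perm V, u ∈ NK T hTcomm k ∧ u y = x := by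
      rintro x y ⟨u, huN, rfl⟩
      exact ⟨u⁻¹, inv_mem huN, Equiv.Perm.inv_apply_self u x⟩
    have htrans : ∀ x y z, (∃ u : Equiv.Perm V, u ∈ NK T hTcomm k ∧ u x = y) →
        (∃ u : Equiv.Perm V, u ∈ NK T hTcomm k ∧ u y = z) →
        ∃ u : Equiv.Perm V, u ∈ NK T hTcomm k ∧ u x = z := by
      rintro x y z ⟨u, huN, rfl⟩ ⟨u', hu'N, rfl⟩
      exact ⟨u' * u, mul_mem hu'N huN, rfl⟩
    have hequi : ∀ t : Equiv.Perm V, t ∈ T k → ∀ x y,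
        (∃ u : Equiv.Perm V, u ∈ NK T hTcomm k ∧ u x = y) →
        ∃ u : Equiv.Perm V, u ∈ NK T hTcomm k ∧ u (t x) = t y := by
      rintro t ht x y ⟨u, huN, rfl⟩
      refine ⟨u, huN, ?_⟩
      have hc := commute_of_mem_NK huN ht
      have : (u * t) x = (t * u) x := by rw [hc]
      rw [Equiv.Perm.mul_apply, Equiv.Perm.mul_apply] at this
      exact this
    have hF1 : ∀ δ ∈ orbitOf M β, ∀ x ∈ Γ.neighborSet δ, ∀ y ∈ Γ.neighborSet δ,
        ∃ u : Equiv.Perm V, u ∈ NK T hTcomm k ∧ u x = y := by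
      rintro δ ⟨m, hm, rfl⟩ x hx y hy
      obtain ⟨u, huN, hus, hux⟩ := httrans k β (m β) m hm rfl htrβ x hx y hy
      exact ⟨u, huN, hux⟩
    have hgoal : ∀ t : Equiv.Perm V, t ∈ T k →
        ∃ u : Equiv.Perm V, u ∈ NK T hTcomm k ∧ u α = t α := by
      by_cases hbip : α ∈ orbitOf M β
      · -- single-orbit case
        have hall : ∀ v : V, v ∈ orbitOf M β := by
          intro v
          rcases hcover v with hA | hB
          · obtain ⟨m, hm, rfl⟩ := hA
            obtain ⟨m0, hm0, hm0β⟩ := hbip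
            exact ⟨m * m0, mul_mem hm hm0, by rw [Equiv.Perm.mul_apply, hm0β]⟩
          · exact hB
        have hABw : ∀ (u v : V) (w : Γ.Walk u v),
            ((∃ u' : Equiv.Perm V, u' ∈ NK T hTcomm k ∧ u' α = v) ∨
             (∃ u' : Equiv.Perm V, u' ∈ NK T hTcomm k ∧ u' β = v)) →
            ((∃ u' : Equiv.Perm V, u' ∈ NK T hTcomm k ∧ u' α = u) ∨
             (∃ u' : Equiv.Perm V, u' ∈ NK T hTcomm k ∧ u' β = u)) := by
          intro u v w
          induction w with
          | nil => exact id
          | @cons a b _ hab _ ih =>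
            intro hv
            rcases ih hv with ⟨w', hw'N, hw'α⟩ | ⟨w', hw'N, hw'β⟩
            · -- b = w' α ; w' β is a neighbour of b related to β
              have hw'G : w' ∈ G := hMleG (NK_le hTM hw'N)
              have hnb : w' β ∈ Γ.neighborSet b := by
                rw [← hw'α, SimpleGraph.mem_neighborSet]
                exact hG w' hw'G _ _ hadj
              have hna : a ∈ Γ.neighborSet b := (SimpleGraph.mem_neighborSet _ _ _).mpr hab.symm
              have h1 := hF1 b (hall b) _ hnb _ hna
              exact Or.inr (htrans _ _ _ ⟨w', hw'N, rfl⟩ h1)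
            · have hw'G : w' ∈ G := hMleG (NK_le hTM hw'N)
              have hnb : w' α ∈ Γ.neighborSet b := by
                rw [← hw'β, SimpleGraph.mem_neighborSet]
                exact hG w' hw'G _ _ hadj.symm
              have hna : a ∈ Γ.neighborSet b := (SimpleGraph.mem_neighborSet _ _ _).mpr hab.symm
              have h1 := hF1 b (hall b) _ hnb _ hna
              exact Or.inl (htrans _ _ _ ⟨w', hw'N, rfl⟩ h1)
        have hABv : ∀ v : V,
            (∃ u' : Equiv.Perm V, u' ∈ NK T hTcomm k ∧ u' α = v) ∨
            (∃ u' : Equiv.Perm V, u' ∈ NK T hTcomm k ∧ u' β = v) := by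
          intro v
          obtain ⟨w⟩ := hconn.preconnected v α
          exact hABw v α w (Or.inl (hrefl α))
        by_cases hab : ∃ u' : Equiv.Perm V, u' ∈ NK T hTcomm k ∧ u' α = β
        · intro t ht
          rcases hABv (t α) with h1 | h1
          · exact h1
          · exact htrans _ _ _ hab h1
        · -- construct the subgroup S of T k
          obtain ⟨S, hmemS⟩ : ∃ S : Subgroup ↥(T k), ∀ s : ↥(T k),
              s ∈ S ↔ ∃ u : Equiv.Perm V, u ∈ NK T hTcomm k ∧
                u α = (s : Equiv.Perm V) α := by
            refine ⟨⟨⟨⟨{s : ↥(T k) | ∃ u : Equiv.Perm V, u ∈ NK T hTcomm k ∧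
              u α = (s : Equiv.Perm V) α}, ?_⟩, ?_⟩, ?_⟩, fun s => Iff.rfl⟩
            · rintro a b ⟨ua, huaN, huaα⟩ hb
              have h1 := hequi (a : Equiv.Perm V) a.2 _ _ hb
              have h2 := htrans _ _ _ ⟨ua, huaN, huaα⟩ h1
              obtain ⟨u, huN, huα⟩ := h2
              refine ⟨u, huN, ?_⟩
              rw [huα, Subgroup.coe_mul, Equiv.Perm.mul_apply]
            · exact ⟨1, one_mem _, by simp⟩
            · rintro a ⟨ua, huaN, huaα⟩
              have h1 := hequi ((a : Equiv.Perm V))⁻¹ (inv_mem a.2) _ _ ⟨ua, huaN, huaα⟩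
              rw [Equiv.Perm.inv_apply_self] at h1
              have h2 := hsymm _ _ h1
              obtain ⟨u, huN, huα⟩ := h2
              exact ⟨u, huN, by rw [huα]; simp⟩
          have hL1 : ∀ s : ↥(T k), s ∉ S →
              ∃ u : Equiv.Perm V, u ∈ NK T hTcomm k ∧ u β = (s : Equiv.Perm V) α := by
            intro s hs
            rcases hABv ((s : Equiv.Perm V) α) with h1 | h1
            · exact absurd ((hmemS s).mpr h1) hs
            · exact h1
          have hSβ : ∀ s : ↥(T k), s ∈ S →
              ∃ u : Equiv.Perm V, u ∈ NK T hTcomm k ∧ u β = (s : Equiv.Perm V) β := by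
            intro s hs
            rcases hABv ((s : Equiv.Perm V) β) with h1 | h1
            · exfalso
              apply hab
              have h2 := hequi ((s : Equiv.Perm V))⁻¹ (inv_mem s.2) _ _ h1
              rw [Equiv.Perm.inv_apply_self] at h2
              have h3 := hequi ((s : Equiv.Perm V))⁻¹ (inv_mem s.2) _ _ ((hmemS s).mp hs)
              rw [Equiv.Perm.inv_apply_self] at h3
              exact htrans _ _ _ (hsymm _ _ h3) h2
            · exact h1
          have hL2 : ∀ s : ↥(T k), s ∉ S →
              ∃ u : Equiv.Perm V, u ∈ NK T hTcomm k ∧ u α = (s : Equiv.Perm V) β := by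
            intro s hs
            rcases hABv ((s : Equiv.Perm V) β) with h1 | h1
            · exact h1
            · exfalso
              apply hab
              obtain ⟨u1, hu1N, hu1⟩ := hL1 s hs
              have h2 : ∃ u : Equiv.Perm V, u ∈ NK T hTcomm k ∧
                  u ((s : Equiv.Perm V) α) = (s : Equiv.Perm V) β :=
                htrans _ _ _ (hsymm _ _ ⟨u1, hu1N, hu1⟩) h1
              have h3 := hequi ((s : Equiv.Perm V))⁻¹ (inv_mem s.2) _ _ h2
              rw [Equiv.Perm.inv_apply_self, Equiv.Perm.inv_apply_self] at h3
              exact h3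
          have hSnormal : S.Normal := by
            constructor
            intro a haS g
            rw [hmemS]
            have hgoalrew : ((g * a * g⁻¹ : ↥(T k)) : Equiv.Perm V) α
                = (g : Equiv.Perm V) ((a : Equiv.Perm V) (((g : Equiv.Perm V))⁻¹ α)) := by
              simp [Equiv.Perm.mul_apply]
            rw [hgoalrew]
            by_cases hgS : g ∈ S
            · have hginv : g⁻¹ ∈ S := S.inv_mem hgS
              have h1 := (hmemS g⁻¹).mp hginv
              rw [Subgroup.coe_inv] at h1
              have h2 := hequi (a : Equiv.Perm V) a.2 _ _ h1
              have h3 := htrans _ _ _ ((hmemS a).mp haS) h2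
              have h4 := hequi (g : Equiv.Perm V) g.2 _ _ h3
              exact htrans _ _ _ ((hmemS g).mp hgS) h4
            · have hginv : g⁻¹ ∉ S := fun hc => hgS (by
                have := S.inv_mem hc
                rwa [inv_inv] at this)
              have h1 := hL1 g⁻¹ hginv
              rw [Subgroup.coe_inv] at h1
              have h2 := hequi (a : Equiv.Perm V) a.2 _ _ h1
              have h3 := htrans _ _ _ (hSβ a haS) h2
              have h4 := hequi (g : Equiv.Perm V) g.2 _ _ h3
              exact htrans _ _ _ (hL2 g hgS) h4
          rcases (hTsimple k).eq_bot_or_eq_top_of_normal S hSnormal with hSbot | hStop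
          · exfalso
            obtain ⟨x, hx, y, hy, hxy⟩ := hTnonab k
            have hprod : ∀ a b : ↥(T k), a ∉ S → b ∉ S → a * b ∈ S := by
              intro a b haS hbS
              rw [hmemS]
              have h1 := hL1 b hbS
              have h2 := hequi (a : Equiv.Perm V) a.2 _ _ h1
              have h3 := htrans _ _ _ (hL2 a haS) h2
              obtain ⟨u, huN, huα⟩ := h3
              exact ⟨u, huN, by rw [huα, Subgroup.coe_mul, Equiv.Perm.mul_apply]⟩
            have hbot1 : ∀ a : ↥(T k), a ∈ S → a = 1 := by
              intro a ha
              rw [hSbot] at ha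
              exact ha
            apply hxy
            by_cases hxS : (⟨x, hx⟩ : ↥(T k)) ∈ S
            · have := hbot1 _ hxS
              have hx1 : x = 1 := congrArg Subtype.val this
              rw [hx1, one_mul, mul_one]
            · by_cases hyS : (⟨y, hy⟩ : ↥(T k)) ∈ S
              · have := hbot1 _ hyS
                have hy1 : y = 1 := congrArg Subtype.val this
                rw [hy1, one_mul, mul_one]
              · have h1 := hbot1 _ (hprod _ _ hxS hyS)
                have h2 := hbot1 _ (hprod _ _ hyS hxS)
                have e1 : x * y = 1 := congrArg Subtype.val h1
                have e2 : y * x = 1 := congrArg Subtype.val h2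
                rw [e1, e2]
          · intro t ht
            have : (⟨t, ht⟩ : ↥(T k)) ∈ S := by
              rw [hStop]
              exact Subgroup.mem_top _
            exact (hmemS _).mp this
      · -- bipartite case : walk-parity argument
        have hOAw : ∀ (u v : V) (w : Γ.Walk u v),
            ((v ∈ orbitOf M α → ∃ u' : Equiv.Perm V, u' ∈ NK T hTcomm k ∧ u' α = v) ∧
             (v ∈ orbitOf M β → ∃ x ∈ Γ.neighborSet v,
               ∃ u' : Equiv.Perm V, u' ∈ NK T hTcomm k ∧ u' α = x)) →
            ((u ∈ orbitOf M α → ∃ u' : Equiv.Perm V, u' ∈ NK T hTcomm k ∧ u' α = u) ∧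
             (u ∈ orbitOf M β → ∃ x ∈ Γ.neighborSet u,
               ∃ u' : Equiv.Perm V, u' ∈ NK T hTcomm k ∧ u' α = x)) := by
          intro u v w
          induction w with
          | nil => exact id
          | @cons a b _ hab _ ih =>
            intro hv
            have hP := ih hv
            constructor
            · intro haA
              have hbB : b ∈ orbitOf M β :=
                hOnbr α β hadj a haA b ((SimpleGraph.mem_neighborSet _ _ _).mpr hab)
              obtain ⟨x, hxb, hrx⟩ := hP.2 hbB
              have hna : a ∈ Γ.neighborSet b := (SimpleGraph.mem_neighborSet _ _ _).mpr hab.symm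
              exact htrans _ _ _ hrx (hF1 b hbB _ hxb _ hna)
            · intro haB
              have hbA : b ∈ orbitOf M α :=
                hOnbr β α hadj.symm a haB b ((SimpleGraph.mem_neighborSet _ _ _).mpr hab)
              exact ⟨b, (SimpleGraph.mem_neighborSet _ _ _).mpr hab, hP.1 hbA⟩
        intro t ht
        have htα : t α ∈ orbitOf M α := ⟨t, hTM k ht, rfl⟩
        obtain ⟨w⟩ := hconn.preconnected (t α) α
        exact (hOAw (t α) α w ⟨fun _ => hrefl α, fun hβ => absurd hβ hbip⟩).1 htα
    -- conclusion : T k ≤ R k, contradicting R k ≠ T k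
    apply hRne k
    refine le_antisymm (hRle k) ?_
    intro t ht
    obtain ⟨u, huN, huα⟩ := hgoal t ht
    have hsM : u⁻¹ * t ∈ M := mul_mem (inv_mem (NK_le hTM huN)) (hTM k ht)
    have hsstab : u⁻¹ * t ∈ stabOf M α := by
      rw [hstab]
      refine ⟨hsM, ?_⟩
      rw [Equiv.Perm.mul_apply, ← huα, Equiv.Perm.inv_apply_self]
    obtain ⟨fu, hfu, hfuk⟩ := huN
    have hseq : u⁻¹ * t = prodOf T (fu⁻¹ * Pi.mulSingle k ⟨t, ht⟩) := by
      rw [prodOf_mul hTcomm, prodOf_inv hTcomm, prodOf_single, ← hfu]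
    have := hMα _ hsstab _ hseq k
    rw [Pi.mul_apply, Pi.inv_apply, hfuk, Pi.mulSingle_eq_same] at this
    simpa using this
  -- the key triviality statement
  have key : ∀ (k : Fin n) (h : Equiv.Perm V),
      h ∈ NK T hTcomm k → h ∈ stabOf M α → h = 1 := by
    intro k h hN hs
    by_contra hne
    rcases hdich k β with hfixβ | htransβ
    · rcases hdich k α with hfixα | htransα
      · -- both fix : propagation along the graph shows h = 1
        have hfixall : ∀ (u v : V) (w : Γ.Walk u v), h v = v → h u = u := by
          intro u v w
          induction w with
          | nil => exact id
          | @cons a b _ hab _ ih =>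
            intro hv
            have hb : h b = b := ih hv
            have hbs : h ∈ stabOf M b := (hstab b h).mpr ⟨NK_le hTM hN, hb⟩
            have hna : a ∈ Γ.neighborSet b := (SimpleGraph.mem_neighborSet _ _ _).mpr hab.symm
            rcases hcover b with hbA | hbB
            · obtain ⟨m, hm, hmb⟩ := hbA
              exact htfix k α b m hm hmb hfixα h hN hbs a hna
            · obtain ⟨m, hm, hmb⟩ := hbB
              exact htfix k β b m hm hmb hfixβ h hN hbs a hna
        have hall : ∀ v, h v = v := by
          intro v
          obtain ⟨w⟩ := hconn.preconnected v α
          exact hfixall v α w ((hstab α h).mp hs).2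
        exact hne (Equiv.ext hall)
      · -- transitive at α : reverse the arc and use hcontra at a new coordinate
        obtain ⟨γ0, hγ0, hγ0β⟩ := (Γ.neighborSet α).exists_ne_of_one_lt_ncard
          (lt_of_lt_of_le (by norm_num) (hval α)) β
        obtain ⟨γ1, hγ1, hγ1α⟩ := (Γ.neighborSet β).exists_ne_of_one_lt_ncard
          (lt_of_lt_of_le (by norm_num) (hval β)) α
        obtain ⟨g, hgG, hg0, hgα, hgβ⟩ := h2arc γ0 α β γ1 β α
          ((SimpleGraph.mem_neighborSet _ _ _).mp hγ0).symm hadj hγ0β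
          ((SimpleGraph.mem_neighborSet _ _ _).mp hγ1).symm hadj.symm hγ1α
        have hgM : ∀ x ∈ M, g * x * g⁻¹ ∈ M := fun x hx => hMG.2 g hgG x hx
        have hgM' : ∀ x ∈ M, g⁻¹ * x * g ∈ M := by
          intro x hx
          have := hMG.2 g⁻¹ (inv_mem hgG) x hx
          rwa [inv_inv] at this
        obtain ⟨k', hk'⟩ := conj_factor hTcomm hTM hfact hTsimple hTnonab hgM hgM' k
        apply hcontra k'
        intro x hx y hy
        have hgx : g x ∈ Γ.neighborSet α := by
          have := hnbr g hgG β x hx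
          rwa [hgβ] at this
        have hgy : g y ∈ Γ.neighborSet α := by
          have := hnbr g hgG β y hy
          rwa [hgβ] at this
        obtain ⟨u, huN, hus, hux⟩ := htransα _ hgx _ hgy
        obtain ⟨huM, huα⟩ := (hstab α u).mp hus
        have hg'α : g⁻¹ α = β := by rw [← hgβ, Equiv.Perm.inv_apply_self]
        refine ⟨g⁻¹ * u * g, ?_, ?_, ?_⟩
        · rw [mem_NK_iff_comm hTM hfact hTsimple hTnonab]
          refine ⟨hgM' u (NK_le hTM huN), ?_⟩
          intro t ht'
          have htk : g * t * g⁻¹ ∈ T k := (hk' t).mp ht'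
          have hcu := commute_of_mem_NK huN htk
          have e1 : g⁻¹ * (u * (g * t * g⁻¹)) * g = (g⁻¹ * u * g) * t := by group
          have e2 : g⁻¹ * ((g * t * g⁻¹) * u) * g = t * (g⁻¹ * u * g) := by group
          rw [← e1, ← e2, hcu]
        · rw [hstab]
          refine ⟨hgM' u (NK_le hTM huN), ?_⟩
          rw [Equiv.Perm.mul_apply, Equiv.Perm.mul_apply, hgβ, huα, hg'α]
        · rw [Equiv.Perm.mul_apply, Equiv.Perm.mul_apply, hux, Equiv.Perm.inv_apply_self]
    · exact hcontra k htransβ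
  -- part 1 : injectivity of every coordinate projection
  have hinj : ∀ i : Fin n, ∀ m ∈ stabOf M α, ∀ m' ∈ stabOf M α,
      ∀ f f' : (i : Fin n) → ↥(T i), m = prodOf T f → m' = prodOf T f' →
        f i = f' i → m = m' := by
    intro i m hm m' hm' f f' hf hf' hfi
    have hd : m * m'⁻¹ ∈ NK T hTcomm i := by
      refine ⟨f * f'⁻¹, ?_, ?_⟩
      · rw [prodOf_mul hTcomm, prodOf_inv hTcomm, ← hf, ← hf']
      · rw [Pi.mul_apply, Pi.inv_apply, hfi, mul_inv_cancel]
    have hds : m * m'⁻¹ ∈ stabOf M α := mul_mem hm (inv_mem hm')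
    exact mul_inv_eq_one.mp (key i _ hd hds)
  refine ⟨hinj, ?_⟩
  -- part 2 : the isomorphism onto R i
  intro i
  have hMof : ∀ s : ↥(stabOf M α), (s : Equiv.Perm V) ∈ M :=
    fun s => ((hstab α s).mp s.2).1
  let fs : ↥(stabOf M α) → ((j : Fin n) → ↥(T j)) :=
    fun s => (hfact (s : Equiv.Perm V) (hMof s)).choose
  have hfs : ∀ s : ↥(stabOf M α), (s : Equiv.Perm V) = prodOf T (fs s) :=
    fun s => (hfact (s : Equiv.Perm V) (hMof s)).choose_spec.1
  have hfsu : ∀ (s : ↥(stabOf M α)) (g' : (j : Fin n) → ↥(T j)),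
      (s : Equiv.Perm V) = prodOf T g' → g' = fs s :=
    fun s g' hg' => (hfact (s : Equiv.Perm V) (hMof s)).choose_spec.2 g' hg'
  have hmemR : ∀ s : ↥(stabOf M α), ((fs s i : Equiv.Perm V)) ∈ R i :=
    fun s => hMα s.1 s.2 (fs s) (hfs s) i
  have hmap1 : ((fs (1 : ↥(stabOf M α)) i : Equiv.Perm V)) = 1 := by
    have h1 : (1 : (j : Fin n) → ↥(T j)) = fs 1 := by
      apply hfsu
      rw [prodOf_one]
      rfl
    rw [← h1]
    rfl
  have hmapmul : ∀ s s' : ↥(stabOf M α),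
      ((fs (s * s') i : Equiv.Perm V)) = ((fs s i : Equiv.Perm V)) * ((fs s' i : Equiv.Perm V)) := by
    intro s s'
    have h1 : fs s * fs s' = fs (s * s') := by
      apply hfsu
      rw [prodOf_mul hTcomm, ← hfs s, ← hfs s']
      rfl
    rw [← h1, Pi.mul_apply]
    rfl
  let φ : ↥(stabOf M α) →* ↥(R i) :=
    ⟨⟨fun s => ⟨((fs s i : Equiv.Perm V)), hmemR s⟩, Subtype.ext hmap1⟩,
      fun s s' => Subtype.ext (hmapmul s s')⟩
  refine ⟨MulEquiv.ofBijective φ ⟨?_, ?_⟩⟩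
  · intro s s' he
    have h1 : ((fs s i : Equiv.Perm V)) = ((fs s' i : Equiv.Perm V)) :=
      congrArg (Subtype.val : ↥(R i) → Equiv.Perm V) he
    have h2 : fs s i = fs s' i := Subtype.ext h1
    exact Subtype.ext (hinj i s.1 s.2 s'.1 s'.2 (fs s) (fs s') (hfs s) (hfs s') h2)
  · intro y
    obtain ⟨m, hm, f, hmf, hfi⟩ := hsurj i y.1 y.2
    refine ⟨⟨m, hm⟩, ?_⟩
    apply Subtype.ext
    show ((fs ⟨m, hm⟩ i : Equiv.Perm V)) = y.1
    have h1 : f = fs ⟨m, hm⟩ := hfsu ⟨m, hm⟩ f hmf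
    rw [← h1, hfi]

end Main
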